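/- If n is a nonzero integer such that the system X² + Y² = Z², XY = 2n has a solution in positive rationals, then there exist integers u, v, m with m ≠ 0 such that n·m² = u·v·(u² − v²). -/

import Mathlib

theorem stmt_3 (n : ℤ) (hn : n ≠ 0)
    (h : ∃ X Y Z : ℚ, 0 < X ∧ 0 < Y ∧ 0 < Z ∧ X^2 + Y^2 = Z^2 ∧ X * Y = 2 * (n : ℚ)) :
    ∃ u v m : ℤ, m ≠ 0 ∧ n * m^2 = u * v * (u^2 - v^2) := by
  obtain ⟨X, Y, Z, hX, hY, hZ, hpyth, harea⟩ := h
  set x : ℚ := (X + Z) / Y with hxdef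
  set y : ℚ := 2 * (X + Z) / Y ^ 2 with hydef
  have hYne : Y ≠ 0 := ne_of_gt hY
  have hcurve : (n : ℚ) * y ^ 2 = x ^ 3 - x := by
    have hn' : (n : ℚ) = X * Y / 2 := by linarith
    rw [hxdef, hydef, hn']
    have e : X * Y / 2 * (2 * (X + Z) / Y ^ 2) ^ 2 - (((X + Z) / Y) ^ 3 - (X + Z) / Y)
        = (X + Z) * (X ^ 2 + Y ^ 2 - Z ^ 2) / Y ^ 3 := by
      field_simp
      ring
    rw [hpyth, sub_self, mul_zero, zero_div] at e
    linarith
  have hyne : y ≠ 0 := by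
    rw [hydef]
    positivity
  -- integer data
  set U : ℤ := x.num
  set V : ℤ := (x.den : ℤ)
  set a : ℤ := y.num
  set b : ℤ := (y.den : ℤ)
  have hVne : V ≠ 0 := Int.natCast_ne_zero.mpr x.den_nz
  have hbne : b ≠ 0 := Int.natCast_ne_zero.mpr y.den_nz
  have hane : a ≠ 0 := Rat.num_ne_zero.mpr hyne
  have hxq : (U : ℚ) / (V : ℚ) = x := Rat.num_div_den x
  have hyq : (a : ℚ) / (b : ℚ) = y := Rat.num_div_den y
  have hVq : (V : ℚ) ≠ 0 := Int.cast_ne_zero.mpr hVne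
  have hbq : (b : ℚ) ≠ 0 := Int.cast_ne_zero.mpr hbne
  refine ⟨b * U, b * V, a * b * V ^ 2, ?_, ?_⟩
  · exact mul_ne_zero (mul_ne_zero hane hbne) (pow_ne_zero 2 hVne)
  · have key : (n : ℚ) * ((a * b * V ^ 2 : ℤ) : ℚ) ^ 2
        = ((b * U : ℤ) : ℚ) * ((b * V : ℤ) : ℚ)
          * (((b * U : ℤ) : ℚ) ^ 2 - ((b * V : ℤ) : ℚ) ^ 2) := by
      push_cast
      have h1 : x = (U : ℚ) / V := hxq.symm
      have h2 : y = (a : ℚ) / b := hyq.symm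
      rw [h1, h2] at hcurve
      field_simp at hcurve
      linear_combination ((b : ℚ) ^ 2 * (V : ℚ)) * hcurve
    exact_mod_cast key
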